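/- Let k ∈ {−1,0,1}, ε, n ∈ {0,1} with εn = εk = 0, and let a, b : ℝ → (0,∞) be arbitrary functions. Let Ψ : ℝ⁴ → ℝ⁴ be the map Ψ(t,r,φ,z) = (t, z + nkφ, r e^{−εz}, φ). Then Ψ pulls g_comp back to g_cyl: for every point q = (t,r,φ,z) and all vectors u, v ∈ ℝ⁴, g_comp(Ψ(q))(DΨ_q u, DΨ_q v) = g_cyl(q)(u, v), where DΨ_q denotes the (Fréchet) derivative of Ψ at q. In particular the compact LRS line element −dt² + a²(dx + nF dw)² + b²e^{2εx}(dy² + Σ²dw²) and the cylindrical-coordinate line element −dt² + a²(dz + n(F+k)dφ)² + b²[(dr − εr dz)² + Σ²dφ²] represent the same metric. -/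

import Mathlib

open Real

/-- `Σ(y,k)`: `sin y` for `k = 1`, `y` for `k = 0`, `sinh y` for `k = −1`. -/
noncomputable def Sig (k y : ℝ) : ℝ :=
  if k = 1 then Real.sin y else if k = 0 then y else Real.sinh y

/-- `F(y,k)`: `−cos y` for `k = 1`, `y²/2` for `k = 0`, `cosh y` for `k = −1`. -/
noncomputable def Ffun (k y : ℝ) : ℝ :=
  if k = 1 then -Real.cos y else if k = 0 then y ^ 2 / 2 else Real.cosh y

/-- Coefficient matrix of the compact LRS line element
`−dt² + a²(dx + nF(y,k)dw)² + b²e^{2εx}(dy² + Σ(y,k)²dw²)` in coordinates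
`(t,x,y,w) = (q 0, q 1, q 2, q 3)`. -/
noncomputable def gcomp (k ε n : ℝ) (a b : ℝ → ℝ) (q : Fin 4 → ℝ) :
    Matrix (Fin 4) (Fin 4) ℝ :=
  !![-1, 0, 0, 0;
     0, (a (q 0)) ^ 2, 0, (a (q 0)) ^ 2 * n * Ffun k (q 2);
     0, 0, (b (q 0)) ^ 2 * Real.exp (2 * ε * q 1), 0;
     0, (a (q 0)) ^ 2 * n * Ffun k (q 2), 0,
       (a (q 0)) ^ 2 * (n * Ffun k (q 2)) ^ 2 +
         (b (q 0)) ^ 2 * Real.exp (2 * ε * q 1) * (Sig k (q 2)) ^ 2]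

/-- Coefficient matrix of the cylindrical LRS line element
`−dt² + a²(dz + n(F(r,k)+k)dφ)² + b²[(dr − εr dz)² + Σ(r,k)²dφ²]` in coordinates
`(t,r,φ,z) = (q 0, q 1, q 2, q 3)`. -/
noncomputable def gcyl (k ε n : ℝ) (a b : ℝ → ℝ) (q : Fin 4 → ℝ) :
    Matrix (Fin 4) (Fin 4) ℝ :=
  !![-1, 0, 0, 0;
     0, (b (q 0)) ^ 2, 0, -ε * q 1 * (b (q 0)) ^ 2;
     0, 0, (a (q 0)) ^ 2 * (n * (Ffun k (q 1) + k)) ^ 2 +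
       (b (q 0)) ^ 2 * (Sig k (q 1)) ^ 2,
       (a (q 0)) ^ 2 * n * (Ffun k (q 1) + k);
     0, -ε * q 1 * (b (q 0)) ^ 2, (a (q 0)) ^ 2 * n * (Ffun k (q 1) + k),
       (a (q 0)) ^ 2 + ε ^ 2 * (q 1) ^ 2 * (b (q 0)) ^ 2]

/-- The coordinate change `Ψ(t,r,φ,z) = (t, z + nkφ, r e^{−εz}, φ)`. -/
noncomputable def Psi (k ε n : ℝ) : (Fin 4 → ℝ) → (Fin 4 → ℝ) := fun q =>
  ![q 0, q 3 + n * k * q 2, q 1 * Real.exp (-(ε * q 3)), q 2]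

noncomputable def PsiProj (i : Fin 4) : (Fin 4 → ℝ) →L[ℝ] ℝ := ContinuousLinearMap.proj i

lemma psi_hasFDerivAt (k ε n : ℝ) (q : Fin 4 → ℝ) :
    HasFDerivAt (Psi k ε n)
      (ContinuousLinearMap.pi
        ![PsiProj 0, PsiProj 3 + (n * k) • PsiProj 2,
          (q 1) • (Real.exp (-(ε * q 3)) • -(ε • PsiProj 3)) +
            Real.exp (-(ε * q 3)) • PsiProj 1,
          PsiProj 2]) q := by
  have hΨ : Psi k ε n = fun x i =>
      (![fun x : Fin 4 → ℝ => x 0,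
        fun x => x 3 + n * k * x 2,
        fun x => x 1 * Real.exp (-(ε * x 3)),
        fun x => x 2] : Fin 4 → (Fin 4 → ℝ) → ℝ) i x := by
    funext x i
    fin_cases i <;> rfl
  rw [hΨ]
  apply hasFDerivAt_pi.2
  intro i
  fin_cases i
  · exact hasFDerivAt_apply 0 q
  · exact
      (hasFDerivAt_apply 3 q).add ((hasFDerivAt_apply 2 q).const_mul (n * k))
  · have h3 : HasFDerivAt (fun x : Fin 4 → ℝ => Real.exp (-(ε * x 3)))
        (Real.exp (-(ε * q 3)) • -(ε • PsiProj 3)) q := by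
      have := (((hasFDerivAt_apply 3 q).const_mul ε).neg).exp
      simpa [PsiProj] using this
    exact (hasFDerivAt_apply 1 q).mul h3
  · exact hasFDerivAt_apply 2 q

lemma psi_fderiv (k ε n : ℝ) (q u : Fin 4 → ℝ) :
    fderiv ℝ (Psi k ε n) q u =
      ![u 0, u 3 + n * k * u 2,
        u 1 * Real.exp (-(ε * q 3)) - q 1 * Real.exp (-(ε * q 3)) * (ε * u 3), u 2] := by
  rw [(psi_hasFDerivAt k ε n q).fderiv]
  funext i
  fin_cases i <;> simp [ContinuousLinearMap.pi_apply, PsiProj] <;> try ring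

/-- `Ψ` pulls the compact LRS metric back to the cylindrical one:
`g_comp(Ψ(q))(DΨ_q u, DΨ_q v) = g_cyl(q)(u,v)` for all `q, u, v`, i.e. the two line
elements represent the same metric. -/
theorem compact_to_cylindrical_pullback (k ε n : ℝ)
    (hk : k = -1 ∨ k = 0 ∨ k = 1) (hε : ε = 0 ∨ ε = 1) (hn : n = 0 ∨ n = 1)
    (hεn : ε * n = 0) (hεk : ε * k = 0)
    (a b : ℝ → ℝ) (hapos : ∀ t, 0 < a t) (hbpos : ∀ t, 0 < b t) :
    ∀ q u v : Fin 4 → ℝ,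
      dotProduct (fderiv ℝ (Psi k ε n) q u)
          ((gcomp k ε n a b (Psi k ε n q)).mulVec (fderiv ℝ (Psi k ε n) q v)) =
        dotProduct u ((gcyl k ε n a b q).mulVec v) := by
  intro q u v
  rw [psi_fderiv, psi_fderiv]
  rcases hε with hε | hε
  · subst hε
    simp [Psi, gcomp, gcyl, dotProduct, Matrix.mulVec, Fin.sum_univ_four]
    norm_num
    ring
  · subst hε
    have hn0 : n = 0 := by linarith [hεn]
    have hk0 : k = 0 := by linarith [hεk]
    subst hn0; subst hk0
    simp [Psi, gcomp, gcyl, dotProduct, Matrix.mulVec, Fin.sum_univ_four, Sig]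
    norm_num
    have h1 : Real.exp (-(q 3)) = (Real.exp (q 3))⁻¹ := Real.exp_neg _
    have h2 : Real.exp (2 * q 3) = Real.exp (q 3) * Real.exp (q 3) := by
      rw [two_mul, Real.exp_add]
    rw [h1, h2]
    have hne : Real.exp (q 3) ≠ 0 := (Real.exp_pos _).ne'
    field_simp
    ring
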